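/- Let k : ℝ^d → ℝ be a measurable function with 0 ≤ k(w) ≤ M for all w ∈ ℝ^d, and let g be its Gaussian smoothing with parameter σ > 0. Then g is differentiable on ℝ^d and its gradient admits the reparameterized score-function representation ∇g(μ) = ∫_{ℝ^d} (2π)^{−d/2} exp(−‖w‖²/2) · (w/σ) · k(μ + σw) dw, i.e., ∇g(μ) = E_{w∼N(0,I)}[(w/σ)·k(μ + σw)]. -/

import Mathlib

open MeasureTheory Real

set_option synthInstance.maxHeartbeats 1000000
set_option maxHeartbeats 1000000
set_option linter.unusedSectionVars false

variable {E : Type*} [NormedAddCommGroup E] [InnerProductSpace ℝ E]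
  [FiniteDimensional ℝ E] [MeasurableSpace E] [BorelSpace E]

lemma integrable_gauss_aux {a : ℝ} (ha : 0 < a) :
    Integrable (fun v : E => rexp (-(a * ‖v‖ ^ 2))) := by
  have h0 : (0 : ℝ) < (a : ℂ).re := by simpa using ha
  have := (GaussianFourier.integrable_cexp_neg_mul_sq_norm_add (V := E) h0 0 (0 : E)).norm
  refine this.congr ?_
  filter_upwards with v
  simp [Complex.norm_exp, neg_mul]
  left; norm_cast

lemma integrable_poly_gauss_aux {a : ℝ} (ha : 0 < a) :
    Integrable (fun v : E => (‖v‖ + 1) * rexp (-(a * ‖v‖ ^ 2))) := by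
  refine Integrable.mono' ((integrable_gauss_aux (E := E) (half_pos ha)).const_mul
    (rexp ((2 * a)⁻¹))) ?_ ?_
  · exact (((continuous_norm.add continuous_const).mul
      ((continuous_const.mul (continuous_norm.pow 2)).neg.rexp)).aestronglyMeasurable)
  · filter_upwards with v
    have hn : (0:ℝ) ≤ ‖v‖ := norm_nonneg v
    rw [Real.norm_eq_abs, abs_of_nonneg (by positivity)]
    have h1 : ‖v‖ + 1 ≤ rexp ‖v‖ := by
      simpa using Real.add_one_le_exp ‖v‖
    have h2 : ‖v‖ ≤ a / 2 * ‖v‖ ^ 2 + (2 * a)⁻¹ := by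
      have := sq_nonneg (a * ‖v‖ - 1)
      have ha' : a ≠ 0 := ne_of_gt ha
      rw [div_mul_eq_mul_div, ← sub_nonneg]
      field_simp
      nlinarith [sq_nonneg (a * ‖v‖ - 1)]
    calc (‖v‖ + 1) * rexp (-(a * ‖v‖ ^ 2))
        ≤ rexp (a / 2 * ‖v‖ ^ 2 + (2 * a)⁻¹) * rexp (-(a * ‖v‖ ^ 2)) := by
          apply mul_le_mul_of_nonneg_right _ (Real.exp_nonneg _)
          exact h1.trans (Real.exp_le_exp.2 h2)
      _ = rexp ((2 * a)⁻¹) * rexp (-(a / 2 * ‖v‖ ^ 2)) := by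
          rw [← Real.exp_add, ← Real.exp_add]; ring_nf

open scoped RealInnerProductSpace in
lemma hasFDerivAt_gauss_aux (b c kw : ℝ) (w x : E) :
    HasFDerivAt (fun x : E => c * rexp (-(b * ‖w - x‖ ^ 2)) * kw)
      ((2 * b * (c * rexp (-(b * ‖w - x‖ ^ 2)) * kw)) • innerSL ℝ (w - x)) x := by
  have h1 : HasFDerivAt (fun x : E => w - x) (-(ContinuousLinearMap.id ℝ E)) x :=
    (hasFDerivAt_id x).const_sub w
  have hsq : HasFDerivAt (fun x : E => ‖w - x‖ ^ 2) ((-2 : ℝ) • innerSL ℝ (w - x)) x := by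
    have h2 := h1.inner ℝ h1
    have hfun : (fun x : E => ‖w - x‖ ^ 2) = fun x : E => ⟪w - x, w - x⟫ :=
      funext fun y => (real_inner_self_eq_norm_sq _).symm
    rw [hfun]
    refine h2.congr_fderiv ?_
    ext h
    simp [fderivInnerCLM_apply, real_inner_comm, inner_sub_left, inner_sub_right]
    ring
  have hq : HasFDerivAt (fun x : E => -(b * ‖w - x‖ ^ 2)) ((2 * b) • innerSL ℝ (w - x)) x := by
    have h3 := (hsq.const_mul b).neg
    refine h3.congr_fderiv ?_
    ext y
    simp
    ring
  have h4 := (hq.exp.const_mul c).mul_const kw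
  refine h4.congr_fderiv ?_
  ext y
  simp
  ring

lemma grad_aux {b c M : ℝ} (hb : 0 < b) (hc : 0 < c) (hM : 0 < M)
    (k : E → ℝ) (hmeas : Measurable k) (hk0 : ∀ w, 0 ≤ k w) (hkM : ∀ w, k w ≤ M) (μ₀ : E) :
    Integrable (fun w : E => (2 * b * (c * rexp (-(b * ‖w - μ₀‖ ^ 2)) * k w)) • innerSL ℝ (w - μ₀)) ∧
    HasFDerivAt (fun x : E => ∫ w : E, c * rexp (-(b * ‖w - x‖ ^ 2)) * k w)
      (∫ w : E, (2 * b * (c * rexp (-(b * ‖w - μ₀‖ ^ 2)) * k w)) • innerSL ℝ (w - μ₀)) μ₀ := by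
  set F' : E → E → (E →L[ℝ] ℝ) :=
    fun x w => (2 * b * (c * rexp (-(b * ‖w - x‖ ^ 2)) * k w)) • innerSL ℝ (w - x) with hF'
  set bound : E → ℝ :=
    fun w => 2 * b * (c * (rexp b * rexp (-(b / 2 * ‖w - μ₀‖ ^ 2))) * M) * (‖w - μ₀‖ + 1)
    with hbound
  have hnorm : ∀ x w : E, ‖F' x w‖ =
      2 * b * (c * rexp (-(b * ‖w - x‖ ^ 2)) * k w) * ‖w - x‖ := by
    intro x w
    simp only [hF']
    rw [norm_smul (2 * b * (c * rexp (-(b * ‖w - x‖ ^ 2)) * k w)) ((innerSL ℝ) (w - x)),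
      innerSL_apply_norm, Real.norm_eq_abs, abs_of_nonneg (mul_nonneg
        (mul_nonneg two_pos.le hb.le)
        (mul_nonneg (mul_nonneg hc.le (Real.exp_nonneg _)) (hk0 w)))]
  have h_bound : ∀ w : E, ∀ x ∈ Metric.ball μ₀ 1, ‖F' x w‖ ≤ bound w := by
    intro w x hx
    rw [hnorm]
    have hd1 : ‖w - x‖ ≤ ‖w - μ₀‖ + 1 := by
      have hx' : ‖μ₀ - x‖ < 1 := by
        simpa [dist_eq_norm, norm_sub_rev] using hx
      calc ‖w - x‖ ≤ ‖w - μ₀‖ + ‖μ₀ - x‖ := norm_sub_le_norm_sub_add_norm_sub w μ₀ x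
        _ ≤ ‖w - μ₀‖ + 1 := by linarith
    have hd2 : ‖w - μ₀‖ ≤ ‖w - x‖ + 1 := by
      have hx' : ‖x - μ₀‖ < 1 := by simpa [dist_eq_norm] using hx
      calc ‖w - μ₀‖ ≤ ‖w - x‖ + ‖x - μ₀‖ := norm_sub_le_norm_sub_add_norm_sub w x μ₀
        _ ≤ ‖w - x‖ + 1 := by linarith
    have hexp : rexp (-(b * ‖w - x‖ ^ 2)) ≤ rexp b * rexp (-(b / 2 * ‖w - μ₀‖ ^ 2)) := by
      rw [← Real.exp_add]
      apply Real.exp_le_exp.2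
      nlinarith [norm_nonneg (w - x), norm_nonneg (w - μ₀), sq_nonneg (‖w - x‖ - 1),
        pow_le_pow_left₀ (norm_nonneg (w - μ₀)) hd2 2, hb.le]
    simp only [hbound]
    have e1 : c * rexp (-(b * ‖w - x‖ ^ 2)) * k w
        ≤ c * (rexp b * rexp (-(b / 2 * ‖w - μ₀‖ ^ 2))) * M :=
      mul_le_mul (mul_le_mul_of_nonneg_left hexp hc.le) (hkM w) (hk0 w) (by positivity)
    exact mul_le_mul (mul_le_mul_of_nonneg_left e1 (by positivity)) hd1 (norm_nonneg _)
      (by positivity)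
  have bound_int : Integrable bound := by
    have h1 := ((integrable_poly_gauss_aux (E := E) (half_pos hb)).comp_sub_right μ₀).const_mul
      (2 * b * (c * (rexp b * M)))
    refine h1.congr ?_
    filter_upwards with w
    rw [hbound]; ring
  have hFmeas : ∀ x : E, AEStronglyMeasurable (fun w : E => c * rexp (-(b * ‖w - x‖ ^ 2)) * k w) := by
    intro x
    exact ((measurable_const.mul
      (((measurable_id.sub measurable_const).norm.pow measurable_const).const_mul b |>.neg.exp)).mul
        hmeas).aestronglyMeasurable
  have hF'meas : AEStronglyMeasurable (F' μ₀) := by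
    refine AEStronglyMeasurable.fun_smul ?_ ?_
    · exact (measurable_const.mul ((measurable_const.mul
        (((measurable_id.sub measurable_const).norm.pow measurable_const).const_mul b
          |>.neg.exp)).mul hmeas)).aestronglyMeasurable
    · exact ((innerSL ℝ (E := E)).continuous.comp
        (continuous_id.sub continuous_const)).aestronglyMeasurable
  have hFint : Integrable (fun w : E => c * rexp (-(b * ‖w - μ₀‖ ^ 2)) * k w) := by
    refine Integrable.mono' (((integrable_gauss_aux (E := E) hb).comp_sub_right μ₀).const_mul
      (c * M)) (hFmeas μ₀) ?_
    filter_upwards with w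
    rw [Real.norm_eq_abs,
      abs_of_nonneg (mul_nonneg (mul_nonneg hc.le (Real.exp_nonneg _)) (hk0 w))]
    have := hkM w; have := hk0 w
    calc c * rexp (-(b * ‖w - μ₀‖ ^ 2)) * k w ≤ c * rexp (-(b * ‖w - μ₀‖ ^ 2)) * M := by gcongr
      _ = c * M * rexp (-(b * ‖w - μ₀‖ ^ 2)) := by ring
  have h_int' : Integrable (F' μ₀) := by
    refine Integrable.mono' bound_int hF'meas ?_
    filter_upwards with w
    exact h_bound w μ₀ (Metric.mem_ball_self one_pos)
  refine ⟨h_int', ?_⟩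
  refine hasFDerivAt_integral_of_dominated_of_fderiv_le (F' := F') (Metric.ball_mem_nhds μ₀ one_pos)
    (Filter.Eventually.of_forall fun x => hFmeas x) hFint hF'meas
    (Filter.Eventually.of_forall h_bound) bound_int
    (Filter.Eventually.of_forall fun w => fun x hx => hasFDerivAt_gauss_aux b c (k w) w x)


/-- The Gaussian smoothing of `k : ℝ^d → ℝ` with parameter `σ`:
`g(μ) = ∫ (2πσ²)^(−d/2) · exp(−‖w − μ‖²/(2σ²)) · k(w) dw = E_{w ∼ N(μ, σ²I)}[k(w)]`. -/
noncomputable def gaussSmooth (d : ℕ) (σ : ℝ) (k : EuclideanSpace ℝ (Fin d) → ℝ) :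
    EuclideanSpace ℝ (Fin d) → ℝ :=
  fun μ => ∫ w, (2 * π * σ ^ 2) ^ (-(d : ℝ) / 2) * Real.exp (-‖w - μ‖ ^ 2 / (2 * σ ^ 2)) * k w

theorem stmt_8 (d : ℕ) (hd : 1 ≤ d) (σ M : ℝ) (hσ : 0 < σ) (hM : 0 < M)
    (k : EuclideanSpace ℝ (Fin d) → ℝ) (hmeas : Measurable k)
    (hk0 : ∀ w, 0 ≤ k w) (hkM : ∀ w, k w ≤ M)
    (g : EuclideanSpace ℝ (Fin d) → ℝ) (hg : g = gaussSmooth d σ k) :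
    Differentiable ℝ g ∧ ∀ μ : EuclideanSpace ℝ (Fin d),
      gradient g μ =
        ∫ w : EuclideanSpace ℝ (Fin d),
          ((2 * π) ^ (-(d : ℝ) / 2) * Real.exp (-‖w‖ ^ 2 / 2) * k (μ + σ • w)) • (σ⁻¹ • w) := by
  set b : ℝ := (2 * σ ^ 2)⁻¹ with hbdef
  set c : ℝ := (2 * π * σ ^ 2) ^ (-(d : ℝ) / 2) with hcdef
  have hb : 0 < b := by positivity
  have hc : 0 < c := Real.rpow_pos_of_pos (by positivity) _
  have hgF : g = fun x : EuclideanSpace ℝ (Fin d) =>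
      ∫ w : EuclideanSpace ℝ (Fin d), c * rexp (-(b * ‖w - x‖ ^ 2)) * k w := by
    rw [hg]
    funext x
    simp only [gaussSmooth]
    congr 1
    funext w
    congr 2
    rw [hbdef, neg_div, div_eq_inv_mul]
  have key : ∀ μ : EuclideanSpace ℝ (Fin d),
      Integrable (fun w : EuclideanSpace ℝ (Fin d) =>
        (2 * b * (c * rexp (-(b * ‖w - μ‖ ^ 2)) * k w)) • innerSL ℝ (w - μ)) ∧
      HasFDerivAt (fun x : EuclideanSpace ℝ (Fin d) =>
          ∫ w : EuclideanSpace ℝ (Fin d), c * rexp (-(b * ‖w - x‖ ^ 2)) * k w)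
        (∫ w : EuclideanSpace ℝ (Fin d),
          (2 * b * (c * rexp (-(b * ‖w - μ‖ ^ 2)) * k w)) • innerSL ℝ (w - μ)) μ :=
    fun μ => grad_aux hb hc hM k hmeas hk0 hkM μ
  constructor
  · intro μ
    rw [hgF]
    exact ((key μ).2).differentiableAt
  intro μ
  obtain ⟨hint, hder⟩ := key μ
  set s : EuclideanSpace ℝ (Fin d) → ℝ :=
    fun w => 2 * b * (c * rexp (-(b * ‖w - μ‖ ^ 2)) * k w) with hs
  set L := InnerProductSpace.toDual ℝ (EuclideanSpace ℝ (Fin d)) with hL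
  have hLpt : ∀ (r : ℝ) (v : EuclideanSpace ℝ (Fin d)),
      L (r • v) = r • innerSL ℝ v := by
    intro r v
    ext y
    simp [hL, InnerProductSpace.toDual_apply_apply, real_inner_smul_left]
  have hsymmpt : ∀ (r : ℝ) (v : EuclideanSpace ℝ (Fin d)),
      L.symm (r • innerSL ℝ v) = r • v := by
    intro r v
    rw [← hLpt r v, L.symm_apply_apply]
  have hfint : Integrable (fun w : EuclideanSpace ℝ (Fin d) => s w • (w - μ)) := by
    have h7 := (L.symm.toContinuousLinearEquiv.toContinuousLinearMap).integrable_comp hint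
    refine h7.congr ?_
    filter_upwards with w
    exact hsymmpt _ _
  have hG : HasGradientAt g (∫ w : EuclideanSpace ℝ (Fin d), s w • (w - μ)) μ := by
    rw [hasGradientAt_iff_hasFDerivAt, hgF]
    have h8 := ContinuousLinearMap.integral_comp_comm
      (L.toContinuousLinearEquiv.toContinuousLinearMap) hfint
    have h9 : (InnerProductSpace.toDual ℝ (EuclideanSpace ℝ (Fin d)))
        (∫ w : EuclideanSpace ℝ (Fin d), s w • (w - μ))
        = ∫ w : EuclideanSpace ℝ (Fin d), s w • innerSL ℝ (w - μ) := by
      rw [show (InnerProductSpace.toDual ℝ (EuclideanSpace ℝ (Fin d)))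
          (∫ w : EuclideanSpace ℝ (Fin d), s w • (w - μ))
          = (L.toContinuousLinearEquiv.toContinuousLinearMap)
            (∫ w : EuclideanSpace ℝ (Fin d), s w • (w - μ)) from rfl, ← h8]
      congr 1
      funext w
      show L _ = _
      rw [hLpt]
    rw [show (InnerProductSpace.toDual ℝ (EuclideanSpace ℝ (Fin d))) = L from rfl] at h9 ⊢
    rw [h9]
    exact hder
  rw [hG.gradient]
  have hAc : c * σ ^ d = (2 * π) ^ (-(d : ℝ) / 2) := by
    rw [hcdef, Real.mul_rpow (by positivity) (by positivity),
      ← Real.rpow_natCast σ 2, ← Real.rpow_natCast σ d, ← Real.rpow_mul hσ.le,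
      mul_assoc, ← Real.rpow_add hσ]
    rw [show ((2:ℕ):ℝ) * (-(d : ℝ) / 2) + d = 0 by push_cast; ring, Real.rpow_zero, mul_one]
  have hpt : ∀ v : EuclideanSpace ℝ (Fin d),
      ((2 * π) ^ (-(d : ℝ) / 2) * rexp (-‖v‖ ^ 2 / 2) * k (μ + σ • v)) • (σ⁻¹ • v)
        = (σ ^ d : ℝ) • (s (μ + σ • v) • (σ • v)) := by
    intro v
    have hnn : ‖μ + σ • v - μ‖ = σ * ‖v‖ := by
      rw [add_sub_cancel_left, norm_smul, Real.norm_eq_abs, abs_of_pos hσ]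
    simp only [hs]
    rw [hnn]
    have hre : rexp (-(b * (σ * ‖v‖) ^ 2)) = rexp (-‖v‖ ^ 2 / 2) := by
      congr 1; rw [hbdef]; field_simp
    rw [hre, smul_smul, smul_smul, smul_smul]
    congr 1
    rw [← hAc, hbdef]
    field_simp
  symm
  calc (∫ v : EuclideanSpace ℝ (Fin d),
        ((2 * π) ^ (-(d : ℝ) / 2) * rexp (-‖v‖ ^ 2 / 2) * k (μ + σ • v)) • (σ⁻¹ • v))
      = ∫ v : EuclideanSpace ℝ (Fin d),
          (σ ^ d : ℝ) • ((fun x => s (μ + x) • x) (σ • v)) := by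
        congr 1; funext v; simpa using hpt v
    _ = (σ ^ d : ℝ) • ∫ v : EuclideanSpace ℝ (Fin d),
          (fun x => s (μ + x) • x) (σ • v) := integral_smul _ _
    _ = (σ ^ d : ℝ) • (|(σ ^ Module.finrank ℝ (EuclideanSpace ℝ (Fin d)))⁻¹| •
          ∫ x : EuclideanSpace ℝ (Fin d), s (μ + x) • x) := by
        rw [MeasureTheory.Measure.integral_comp_smul volume (fun x => s (μ + x) • x) σ]
    _ = ∫ x : EuclideanSpace ℝ (Fin d), s (μ + x) • x := by
        rw [finrank_euclideanSpace_fin, abs_of_pos (by positivity), smul_smul,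
          mul_inv_cancel₀ (by positivity), one_smul]
    _ = ∫ w : EuclideanSpace ℝ (Fin d), s w • (w - μ) := by
        rw [← MeasureTheory.integral_add_left_eq_self (μ := volume)
          (fun w : EuclideanSpace ℝ (Fin d) => s w • (w - μ)) μ]
        congr 1; funext x; simp
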